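/- arXiv:2008.06023 — 2 statements merged into one kernel-verified Lean document; each statement's English description precedes it below -/
import Mathlib

section
/- Let β, γ, λ, M, q > 0 and ω* ≥ 0 with 0 < β - γ < γ/ω*. Then the point (Ē, Ī, ω̄, P̄_I, P̄_ω) = ((M/λ)·r^{1/q}, (M/γ)·r^{1/q}, (β-γ)/β, (β-γ)/(β-ω*(β-γ)), (β-γ)/β), where r = (β-γ)/(γ-ω*(β-γ)), is an equilibrium of the two-delay system dE/dt = β(1-ω)I - λE, dI/dt = λE - γI, dω/dt = k_ω(P_I(1-ω*P_ω) - ω), dP_I/dt = k_{P_I}((λE)^q/(M^q+(λE)^q) - P_I), dP_ω/dt = k_{P_ω}(ω - P_ω), and all five coordinates lie in (0, ∞) with ω̄, P̄_I, P̄_ω ∈ (0,1). -/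
/-- The endemic point is an equilibrium of the two-delay system, with all
coordinates positive and the behavioral coordinates in (0,1). -/
theorem endemic_equilibrium_two_delay
    (β γ l M q kw kPI kpw w : ℝ)
    (hβ : 0 < β) (hγ : 0 < γ) (hl : 0 < l) (hM : 0 < M) (hq : 0 < q)
    (hkw : 0 < kw) (hkPI : 0 < kPI) (hkpw : 0 < kpw) (hw : 0 ≤ w)
    (hout : 0 < β - γ) (hctrl : w * (β - γ) < γ) :
    let r : ℝ := (β - γ) / (γ - w * (β - γ))
    let Ebar : ℝ := (M / l) * r ^ (1 / q)
    let Ibar : ℝ := (M / γ) * r ^ (1 / q)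
    let ωbar : ℝ := (β - γ) / β
    let PIbar : ℝ := (β - γ) / (β - w * (β - γ))
    let Pωbar : ℝ := (β - γ) / β
    (β * (1 - ωbar) * Ibar - l * Ebar = 0) ∧
    (l * Ebar - γ * Ibar = 0) ∧
    (kw * (PIbar * (1 - w * Pωbar) - ωbar) = 0) ∧
    (kPI * ((l * Ebar) ^ q / (M ^ q + (l * Ebar) ^ q) - PIbar) = 0) ∧
    (kpw * (ωbar - Pωbar) = 0) ∧
    0 < Ebar ∧ 0 < Ibar ∧
    ωbar ∈ Set.Ioo (0 : ℝ) 1 ∧ PIbar ∈ Set.Ioo (0 : ℝ) 1 ∧ Pωbar ∈ Set.Ioo (0 : ℝ) 1 := by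
  intro r Ebar Ibar ωbar PIbar Pωbar
  have hD : 0 < γ - w * (β - γ) := sub_pos.mpr hctrl
  have hB : 0 < β - w * (β - γ) := by nlinarith
  have hr : 0 < r := div_pos hout hD
  have hrp : 0 < r ^ (1 / q) := Real.rpow_pos_of_pos hr _
  have hlE : l * Ebar = M * r ^ (1 / q) := by
    show l * ((M / l) * r ^ (1 / q)) = M * r ^ (1 / q)
    field_simp
  have hpow : (l * Ebar) ^ q = M ^ q * r := by
    rw [hlE, Real.mul_rpow hM.le hrp.le,
      ← Real.rpow_mul hr.le, one_div_mul_cancel hq.ne', Real.rpow_one]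
  refine ⟨?_, ?_, ?_, ?_, ?_, ?_, ?_, ?_, ?_, ?_⟩
  · show β * (1 - (β - γ) / β) * Ibar - l * Ebar = 0
    rw [hlE]
    show β * (1 - (β - γ) / β) * ((M / γ) * r ^ (1 / q)) - M * r ^ (1 / q) = 0
    field_simp
    ring
  · rw [hlE]
    show M * r ^ (1 / q) - γ * ((M / γ) * r ^ (1 / q)) = 0
    field_simp
    ring
  · show kw * ((β - γ) / (β - w * (β - γ)) * (1 - w * ((β - γ) / β)) - (β - γ) / β) = 0
    have : (β - γ) / (β - w * (β - γ)) * (1 - w * ((β - γ) / β)) - (β - γ) / β = 0 := by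
      rw [sub_eq_zero, div_mul_eq_mul_div, div_eq_div_iff hB.ne' hβ.ne']
      field_simp
    rw [this, mul_zero]
  · rw [hpow]
    have : M ^ q * r / (M ^ q + M ^ q * r) - PIbar = 0 := by
      have hMq : 0 < M ^ q := Real.rpow_pos_of_pos hM _
      show M ^ q * r / (M ^ q + M ^ q * r) - (β - γ) / (β - w * (β - γ)) = 0
      have hden : 0 < M ^ q + M ^ q * r := by positivity
      rw [sub_eq_zero, div_eq_div_iff hden.ne' hB.ne']
      show M ^ q * ((β - γ) / (γ - w * (β - γ))) * (β - w * (β - γ)) =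
        (β - γ) * (M ^ q + M ^ q * ((β - γ) / (γ - w * (β - γ))))
      rw [mul_div_assoc', div_mul_eq_mul_div, add_div' _ _ _ hD.ne', mul_div_assoc', div_eq_div_iff hD.ne' hD.ne']
      ring
    rw [this, mul_zero]
  · show kpw * ((β - γ) / β - (β - γ) / β) = 0
    ring
  · exact mul_pos (div_pos hM hl) hrp
  · exact mul_pos (div_pos hM hγ) hrp
  · exact ⟨div_pos hout hβ, (div_lt_one hβ).mpr (by linarith)⟩
  · exact ⟨div_pos hout hB, (div_lt_one hB).mpr (by nlinarith)⟩
  · exact ⟨div_pos hout hβ, (div_lt_one hβ).mpr (by linarith)⟩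
end

section
/- Suppose E(t), I(t) are nonnegative differentiable functions on [0,∞) solving the reduced no-delay system in the uncontrolled regime (β - γ > γ/ω*, all parameters positive) with E(0) > 0, and suppose E(t) + I(t) is bounded above. Then E(t) + I(t) converges as t → ∞, and if additionally any finite limit point of (E(t), I(t)) must be an equilibrium and the only nonnegative equilibrium is (0,0), a contradiction follows with the strict monotonicity of E + I from E(0) + I(0) > 0. Hence E(t) + I(t) → ∞. -/
open Filter

/-- In the uncontrolled regime, if every cluster point of the trajectory is an
equilibrium and the only nonnegative equilibrium is the origin, then the total
infection level E + I tends to infinity. -/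
theorem uncontrolled_total_infection_unbounded
    (β γ l M q w : ℝ) (hβ : 0 < β) (hγ : 0 < γ) (hl : 0 < l) (hM : 0 < M)
    (hq : 0 < q) (hw : 0 < w) (huncont : γ / w < β - γ)
    (E I : ℝ → ℝ)
    (hE : ∀ t, HasDerivAt E
      (β * (1 - (l * E t) ^ q / (M ^ q + (1 + w) * (l * E t) ^ q)) * I t - l * E t) t)
    (hI : ∀ t, HasDerivAt I (l * E t - γ * I t) t)
    (hEnn : ∀ t, 0 ≤ E t) (hInn : ∀ t, 0 ≤ I t)
    (hE0 : 0 < E 0)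
    (hconv : BddAbove (Set.range fun t => E t + I t) →
      ∃ L : ℝ, Tendsto (fun t => E t + I t) atTop (nhds L))
    (hcluster : ∀ p : ℝ × ℝ,
      MapClusterPt p atTop (fun t => (E t, I t)) →
      β * (1 - (l * p.1) ^ q / (M ^ q + (1 + w) * (l * p.1) ^ q)) * p.2 - l * p.1 = 0 ∧
      l * p.1 - γ * p.2 = 0)
    (heq : ∀ E' I' : ℝ, 0 ≤ E' → 0 ≤ I' →
      β * (1 - (l * E') ^ q / (M ^ q + (1 + w) * (l * E') ^ q)) * I' - l * E' = 0 →
      l * E' - γ * I' = 0 → E' = 0 ∧ I' = 0)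
    (hmono : StrictMonoOn (fun t => E t + I t) (Set.Ici (0 : ℝ))) :
    Tendsto (fun t => E t + I t) atTop atTop := by
  set f : ℝ → ℝ := fun t => E t + I t with hf
  -- f is monotone on all of ℝ
  have hderiv : ∀ t, HasDerivAt f
      ((β * (1 - (l * E t) ^ q / (M ^ q + (1 + w) * (l * E t) ^ q)) * I t - l * E t)
        + (l * E t - γ * I t)) t := fun t => (hE t).add (hI t)
  have hd_nonneg : ∀ t, 0 ≤ (β * (1 - (l * E t) ^ q / (M ^ q + (1 + w) * (l * E t) ^ q)) * I t
      - l * E t) + (l * E t - γ * I t) := by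
    intro t
    set x := (l * E t) ^ q with hx
    have hx0 : 0 ≤ x := Real.rpow_nonneg (mul_nonneg hl.le (hEnn t)) q
    have hMq : 0 < M ^ q := Real.rpow_pos_of_pos hM q
    have hD : 0 < M ^ q + (1 + w) * x := by nlinarith
    have hr : x / (M ^ q + (1 + w) * x) ≤ 1 / (1 + w) := by
      rw [div_le_div_iff₀ hD (by linarith)]
      nlinarith
    have hβγ : γ * (1 + w) < β * w := by
      have := (div_lt_iff₀ hw).mp huncont
      nlinarith
    have h1 : γ ≤ β * (1 - x / (M ^ q + (1 + w) * x)) := by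
      have : β * (1 - 1 / (1 + w)) ≤ β * (1 - x / (M ^ q + (1 + w) * x)) := by
        apply mul_le_mul_of_nonneg_left (by linarith) hβ.le
      have h2 : β * (1 - 1 / (1 + w)) = β * w / (1 + w) := by
        field_simp; ring
      have h3 : γ < β * w / (1 + w) := by
        rw [lt_div_iff₀ (by linarith : (0:ℝ) < 1 + w)]; nlinarith
      linarith
    nlinarith [mul_le_mul_of_nonneg_right h1 (hInn t)]
  have hMono : Monotone f :=
    monotone_of_hasDerivAt_nonneg hderiv hd_nonneg
  by_cases hb : BddAbove (Set.range f)
  · -- bounded case: derive a contradiction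
    exfalso
    obtain ⟨L, hL⟩ := hconv hb
    obtain ⟨B, hB⟩ := hb
    have hBd : ∀ t, f t ≤ B := fun t => hB ⟨t, rfl⟩
    -- the trajectory lies in a compact box
    have hK : IsCompact ((Set.Icc (0:ℝ) B) ×ˢ (Set.Icc (0:ℝ) B)) :=
      isCompact_Icc.prod isCompact_Icc
    have hmem : ∀ t, (E t, I t) ∈ (Set.Icc (0:ℝ) B) ×ˢ (Set.Icc (0:ℝ) B) := by
      intro t
      have h1 := hEnn t; have h2 := hInn t; have h3 := hBd t
      simp only [hf] at h3
      constructor <;> constructor <;> simp <;> linarith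
    obtain ⟨p, hpK, hpcl⟩ := hK.exists_mapClusterPt
      (f := atTop) (u := fun t => (E t, I t))
      (le_principal_iff.mpr (Filter.mem_map.mpr (by
        filter_upwards with t using hmem t)))
    obtain ⟨heq1, heq2⟩ := hcluster p hpcl
    obtain ⟨hp1, hp2⟩ := heq p.1 p.2 hpK.1.1 hpK.2.1 heq1 heq2
    -- f clusters at 0
    have hcl0 : MapClusterPt (0:ℝ) atTop f := by
      have : Tendsto (fun z : ℝ × ℝ => z.1 + z.2) (nhds p) (nhds 0) := by
        rw [show (0:ℝ) = p.1 + p.2 by rw [hp1, hp2]; ring]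
        exact (continuous_fst.add continuous_snd).continuousAt
      exact hpcl.tendsto_comp this
    -- hence L = 0
    have hL0 : (0:ℝ) = L := by
      have h1 : ClusterPt (0:ℝ) (Filter.map f atTop) := hcl0.clusterPt
      have h2 : ClusterPt (0:ℝ) (nhds L) := h1.mono hL
      exact eq_of_nhds_neBot h2
    -- but L ≥ f 0 > 0
    have hfL : f 0 ≤ L := ge_of_tendsto hL (by
      filter_upwards [eventually_ge_atTop (0:ℝ)] with t ht using hMono ht)
    have : 0 < f 0 := by
      have := hInn 0
      simp only [hf]; linarith
    linarith [hL0 ▸ hfL]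
  · exact tendsto_atTop_atTop_of_monotone' hMono hb
end
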